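/- arXiv:2208.03856 — 3 statements merged into one kernel-verified Lean document; each statement's English description precedes it below -/
import Mathlib

section
/- Let x, y, s, t be integers such that x^2 + s^2 - s^4 = t^2 and y^2 + t^2 - t^4 = 1 - s^2. Then (x,y,s,t) = (±1, ±1, 0, ±1), or (0, 0, ±1, 0), or (±u^2, ±(u^2-1), ±u, ±u) for some integer u. -/
lemma sq_eq_cases (a b : ℤ) (h : a^2 = b^2) : a = b ∨ a = -b := by
  have h2 : (a - b) * (a + b) = 0 := by linear_combination h
  rcases mul_eq_zero.mp h2 with h3 | h3
  · left; linarith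
  · right; linarith

lemma sq_le_of_lt_succ_sq (n z : ℤ) (hn : 0 ≤ n) (h : z^2 < (n+1)^2) : z^2 ≤ n^2 := by
  have hu : z ≤ n := by
    by_contra h'
    push_neg at h'
    have : n + 1 ≤ z := h'
    nlinarith
  have hl : -n ≤ z := by
    by_contra h'
    push_neg at h'
    have : z ≤ -(n+1) := by linarith
    nlinarith
  nlinarith

theorem stmt_2 (x y s t : ℤ)
    (h1 : x^2 + s^2 - s^4 = t^2) (h2 : y^2 + t^2 - t^4 = 1 - s^2) :
    ((x = 1 ∨ x = -1) ∧ (y = 1 ∨ y = -1) ∧ s = 0 ∧ (t = 1 ∨ t = -1)) ∨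
    (x = 0 ∧ y = 0 ∧ (s = 1 ∨ s = -1) ∧ t = 0) ∨
    (∃ u : ℤ, (x = u^2 ∨ x = -u^2) ∧ (y = u^2 - 1 ∨ y = -(u^2 - 1)) ∧
      (s = u ∨ s = -u) ∧ (t = u ∨ t = -u)) := by
  rcases lt_trichotomy (s^2) (t^2) with hlt | heq | hgt
  · -- s^2 < t^2
    by_cases hs : s = 0
    · subst hs
      have hB1 : 1 ≤ t^2 := by linarith
      rcases eq_or_lt_of_le hB1 with hB | hB
      · -- t^2 = 1
        have ht : t = 1 ∨ t = -1 := sq_eq_cases t 1 (by linarith)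
        have hx : x = 1 ∨ x = -1 := sq_eq_cases x 1 (by nlinarith)
        have hy : y = 1 ∨ y = -1 := sq_eq_cases y 1 (by nlinarith)
        exact Or.inl ⟨hx, hy, rfl, ht⟩
      · -- t^2 ≥ 2 : contradiction
        exfalso
        have hle : y^2 ≤ (t^2 - 1)^2 := by
          have := sq_le_of_lt_succ_sq (t^2 - 1) y (by linarith) (by nlinarith)
          linarith [this]
        nlinarith
    · -- s ≠ 0, so s^2 ≥ 1, t^2 > s^2 ≥ 1 : contradiction
      exfalso
      have hA : 1 ≤ s^2 := by
        have : 0 < s^2 := by positivity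
        linarith
      have hle : y^2 ≤ (t^2 - 1)^2 := by
        have := sq_le_of_lt_succ_sq (t^2 - 1) y (by linarith) (by nlinarith)
        linarith [this]
      nlinarith
  · -- s^2 = t^2
    right; right
    refine ⟨s, ?_, ?_, Or.inl rfl, ?_⟩
    · exact sq_eq_cases x (s^2) (by nlinarith)
    · exact sq_eq_cases y (s^2 - 1) (by nlinarith)
    · rcases sq_eq_cases t s heq.symm with h | h
      · exact Or.inl h
      · right; linarith
  · -- t^2 < s^2
    by_cases ht : t = 0
    · subst ht
      have hA1 : 1 ≤ s^2 := by linarith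
      rcases eq_or_lt_of_le hA1 with hA | hA
      · -- s^2 = 1
        have hs : s = 1 ∨ s = -1 := sq_eq_cases s 1 (by linarith)
        have hx : x = 0 := by nlinarith
        have hy : y = 0 := by nlinarith
        exact Or.inr (Or.inl ⟨hx, hy, hs, rfl⟩)
      · -- s^2 ≥ 2 : contradiction
        exfalso
        have hle : x^2 ≤ (s^2 - 1)^2 := by
          have := sq_le_of_lt_succ_sq (s^2 - 1) x (by linarith) (by nlinarith)
          linarith [this]
        nlinarith
    · exfalso
      have hB : 1 ≤ t^2 := by
        have : 0 < t^2 := by positivity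
        linarith
      have hle : x^2 ≤ (s^2 - 1)^2 := by
        have := sq_le_of_lt_succ_sq (s^2 - 1) x (by linarith) (by nlinarith)
        linarith [this]
      nlinarith
end

section
/- Let x, y, s, t be integers such that x^2 + s^2 - s^4 = t^2 and y^2 - 1 - t^2 - t^4 = -s^2. Then (x,y,s,t) = (0, 0, ±1, 0) or (0, ±1, 0, 0). -/
lemma no_sq_between (a b : ℤ) (ha : 0 ≤ a) (h1 : a^2 < b^2) (h2 : b^2 < (a+1)^2) :
    False := by
  rcases le_or_gt 0 b with hb | hb
  · have hba : a < b := by nlinarith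
    nlinarith
  · have hba : a < -b := by nlinarith
    nlinarith

lemma sq_eq_one_int (a : ℤ) (h : a^2 = 1) : a = 1 ∨ a = -1 := by
  have : (a - 1) * (a + 1) = 0 := by ring_nf; linarith
  rcases mul_eq_zero.mp this with h' | h'
  · left; linarith
  · right; linarith

theorem stmt_10 (x y s t : ℤ)
    (h1 : x^2 + s^2 - s^4 = t^2) (h2 : y^2 - 1 - t^2 - t^4 = -s^2) :
    (x = 0 ∧ y = 0 ∧ (s = 1 ∨ s = -1) ∧ t = 0) ∨
    (x = 0 ∧ (y = 1 ∨ y = -1) ∧ s = 0 ∧ t = 0) := by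
  rcases le_or_gt (s^2) (t^2) with hst | hst
  · rcases eq_or_ne t 0 with ht | ht
    · subst ht
      have hs : s = 0 := by nlinarith [sq_nonneg s]
      subst hs
      have hx : x = 0 := by nlinarith [sq_nonneg x]
      right
      exact ⟨hx, sq_eq_one_int y (by linarith), rfl, rfl⟩
    · exfalso
      have ht1 : 1 ≤ t^2 := by
        have := pow_two_pos_of_ne_zero ht
        omega
      exact no_sq_between (t^2) y (by positivity) (by nlinarith) (by nlinarith)
  · have hs1 : t^2 + 1 ≤ s^2 := hst
    by_cases hbig : 2 ≤ s^2 + t^2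
    · exfalso
      have hs2 : 1 ≤ s^2 := by nlinarith [sq_nonneg t]
      exact no_sq_between (s^2 - 1) x (by linarith) (by nlinarith) (by nlinarith)
    · have ht : t = 0 := by nlinarith [sq_nonneg t, sq_nonneg s]
      subst ht
      have hs : s^2 = 1 := by nlinarith [sq_nonneg s]
      have hx : x = 0 := by nlinarith [sq_nonneg x]
      have hy : y = 0 := by nlinarith [sq_nonneg y]
      exact Or.inl ⟨hx, hy, sq_eq_one_int s hs, rfl⟩
end

section
/- Let φ(x) = x^2 + c with c = -1 - s^2 - s^4 for some nonzero integer s. Then the set of rational preperiodic points of φ is exactly {s^2, -s^2, 1+s^2, -(1+s^2)}; in particular s^2 and -(1+s^2) form a 2-cycle, φ(-s^2) = -(1+s^2), φ(1+s^2) = s^2, and no other rational point maps into this set under φ. -/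
/-- The integer map `x ↦ x^2 - (a^2 + a + 1)`, i.e. `x^2 + c` with `c = -1 - s^2 - s^4`, `a = s^2`. -/
def fI (a x : ℤ) : ℤ := x ^ 2 - (a ^ 2 + a + 1)

lemma no_sq1 (a x : ℤ) (ha : 1 ≤ a) : x ^ 2 ≠ a ^ 2 + 1 := by
  intro h
  rcases le_or_gt |x| a with hb | hb
  · nlinarith [abs_nonneg x, sq_abs x]
  · have h2 : a + 1 ≤ |x| := hb
    nlinarith [sq_abs x]

lemma no_sq2 (a x : ℤ) (ha : 1 ≤ a) : x ^ 2 ≠ a ^ 2 + 2 * a + 2 := by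
  intro h
  rcases le_or_gt |x| (a + 1) with hb | hb
  · nlinarith [abs_nonneg x, sq_abs x]
  · have h2 : a + 2 ≤ |x| := by omega
    nlinarith [sq_abs x]

lemma sq_cases' (x y : ℤ) (h : x ^ 2 = y ^ 2) : x = y ∨ x = -y := by
  have h0 : (x - y) * (x + y) = 0 := by linear_combination h
  rcases mul_eq_zero.mp h0 with h1 | h1
  · left; linarith
  · right; linarith

lemma premap (a x : ℤ) (ha : 1 ≤ a)
    (h : fI a x = a ∨ fI a x = -a ∨ fI a x = a + 1 ∨ fI a x = -(a + 1)) :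
    x = a ∨ x = -a ∨ x = a + 1 ∨ x = -(a + 1) := by
  unfold fI at h
  rcases h with h | h | h | h
  · have h2 : x ^ 2 = (a + 1) ^ 2 := by linear_combination h
    rcases sq_cases' x (a + 1) h2 with h1 | h1
    · exact Or.inr (Or.inr (Or.inl h1))
    · exact Or.inr (Or.inr (Or.inr h1))
  · exact absurd (by linear_combination h) (no_sq1 a x ha)
  · exact absurd (by linear_combination h) (no_sq2 a x ha)
  · have h2 : x ^ 2 = a ^ 2 := by linear_combination h
    rcases sq_cases' x a h2 with h1 | h1
    · exact Or.inl h1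
    · exact Or.inr (Or.inl h1)

lemma escape_step (a x : ℤ) (ha : 1 ≤ a) (hx : a + 2 ≤ |x|) :
    |x| + 1 ≤ |fI a x| ∧ a + 2 ≤ |fI a x| := by
  have h1 : x ^ 2 = |x| ^ 2 := (sq_abs x).symm
  have h2 : 0 ≤ fI a x := by unfold fI; nlinarith
  have h3 : |fI a x| = fI a x := abs_of_nonneg h2
  refine ⟨?_, ?_⟩ <;> rw [h3] <;> unfold fI <;> nlinarith

lemma escape (a x : ℤ) (ha : 1 ≤ a) (hx : a + 2 ≤ |x|) :
    ∀ k : ℕ, |x| + k ≤ |(fI a)^[k] x| ∧ a + 2 ≤ |(fI a)^[k] x| := by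
  intro k
  induction k with
  | zero => simpa using hx
  | succ k ih =>
    rw [Function.iterate_succ_apply']
    obtain ⟨h1, h2⟩ := ih
    obtain ⟨h3, h4⟩ := escape_step a _ ha h2
    refine ⟨?_, h4⟩
    push_cast
    linarith

lemma bound_of_periodic (a x : ℤ) (ha : 1 ≤ a) (n : ℕ) (hn : 1 ≤ n)
    (h : (fI a)^[n] x = x) : |x| ≤ a + 1 := by
  by_contra hc
  push_neg at hc
  have hx : a + 2 ≤ |x| := by omega
  obtain ⟨h1, _⟩ := escape a x ha hx n
  rw [h] at h1
  have hn' : (1 : ℤ) ≤ (n : ℤ) := by exact_mod_cast hn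
  linarith

lemma pair_step (a y : ℤ) (h : y = a ∨ y = -(a + 1)) :
    fI a y = a ∨ fI a y = -(a + 1) := by
  rcases h with h | h <;> subst h <;> unfold fI
  · right; ring
  · left; ring

lemma pair_iter (a : ℤ) (k : ℕ) (y : ℤ) (h : y = a ∨ y = -(a + 1)) :
    (fI a)^[k] y = a ∨ (fI a)^[k] y = -(a + 1) := by
  induction k with
  | zero => simpa using h
  | succ k ih =>
    rw [Function.iterate_succ_apply']
    exact pair_step a _ ih

lemma periodic_class (a x : ℤ) (ha : 1 ≤ a) (n : ℕ) (hn : 1 ≤ n)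
    (h : (fI a)^[n] x = x) : x = a ∨ x = -(a + 1) := by
  have hfx : (fI a)^[n] (fI a x) = fI a x := by
    rw [← Function.iterate_succ_apply, Function.iterate_succ_apply', h]
  have hb1 : |x| ≤ a + 1 := bound_of_periodic a x ha n hn h
  have hb2 : |fI a x| ≤ a + 1 := bound_of_periodic a _ ha n hn hfx
  obtain ⟨hl2, hr2⟩ := abs_le.mp hb2
  unfold fI at hl2 hr2
  -- a ≤ |x| ≤ a + 1
  have hge : a ≤ |x| := by
    by_contra hcc
    push_neg at hcc
    nlinarith [sq_abs x, abs_nonneg x]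
  have hx4 : x = a ∨ x = -a ∨ x = a + 1 ∨ x = -(a + 1) := by
    have hba : |x| = a ∨ |x| = a + 1 := by omega
    rcases abs_choice x with hc | hc <;> rcases hba with hd | hd <;> omega
  have hpair : fI a x = a ∨ fI a x = -(a + 1) := by
    rcases hx4 with h1 | h1 | h1 | h1 <;> subst h1 <;> unfold fI
    · right; ring
    · right; ring
    · left; ring
    · left; ring
  obtain ⟨k, rfl⟩ : ∃ k, n = k + 1 := ⟨n - 1, by omega⟩
  rw [← h, Function.iterate_succ_apply]
  exact pair_iter a k _ hpair

lemma preorbit (a : ℤ) (ha : 1 ≤ a) :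
    ∀ (m : ℕ) (x : ℤ),
      ((fI a)^[m] x = a ∨ (fI a)^[m] x = -a ∨ (fI a)^[m] x = a + 1 ∨ (fI a)^[m] x = -(a + 1)) →
      x = a ∨ x = -a ∨ x = a + 1 ∨ x = -(a + 1) := by
  intro m
  induction m with
  | zero => intro x h; simpa using h
  | succ m ih =>
    intro x h
    rw [Function.iterate_succ_apply] at h
    exact premap a x ha (ih (fI a x) h)

lemma den_add_intCast (q : ℚ) (c : ℤ) : (q + (c : ℚ)).den = q.den := by
  refine Nat.dvd_antisymm ?_ ?_
  · have := Rat.add_den_dvd q (c : ℚ)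
    simpa using this
  · have := Rat.add_den_dvd (q + (c : ℚ)) ((-c : ℤ) : ℚ)
    simpa using this

theorem stmt_19 (s : ℤ) (hs : s ≠ 0) (φ : ℚ → ℚ)
    (hφ : ∀ x : ℚ, φ x = x^2 + (-1 - (s : ℚ)^2 - (s : ℚ)^4)) :
    {P : ℚ | ∃ m n : ℕ, 1 ≤ n ∧ φ^[n] (φ^[m] P) = φ^[m] P} =
      {(s : ℚ)^2, -(s : ℚ)^2, 1 + (s : ℚ)^2, -(1 + (s : ℚ)^2)} ∧
    φ ((s : ℚ)^2) = -(1 + (s : ℚ)^2) ∧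
    φ (-(1 + (s : ℚ)^2)) = (s : ℚ)^2 ∧
    φ (-(s : ℚ)^2) = -(1 + (s : ℚ)^2) ∧
    φ (1 + (s : ℚ)^2) = (s : ℚ)^2 ∧
    ∀ P : ℚ, φ P ∈ ({(s : ℚ)^2, -(s : ℚ)^2, 1 + (s : ℚ)^2, -(1 + (s : ℚ)^2)} : Set ℚ) →
      P ∈ ({(s : ℚ)^2, -(s : ℚ)^2, 1 + (s : ℚ)^2, -(1 + (s : ℚ)^2)} : Set ℚ) := by
  have ha : (1 : ℤ) ≤ s ^ 2 := by
    have h0 : s ^ 2 ≠ 0 := pow_ne_zero 2 hs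
    have h1 : 0 ≤ s ^ 2 := sq_nonneg s
    omega
  set a : ℤ := s ^ 2 with ha_def
  -- casting the dynamics to ℤ
  have hcast : ∀ x : ℤ, φ (x : ℚ) = ((fI a x : ℤ) : ℚ) := by
    intro x
    rw [hφ]
    unfold fI
    push_cast [ha_def]
    ring
  have hiter : ∀ (k : ℕ) (x : ℤ), φ^[k] (x : ℚ) = (((fI a)^[k] x : ℤ) : ℚ) := by
    intro k
    induction k with
    | zero => intro x; simp
    | succ k ih =>
      intro x
      rw [Function.iterate_succ_apply, Function.iterate_succ_apply, hcast, ih]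
  -- denominators
  have hden : ∀ x : ℚ, (φ x).den = x.den ^ 2 := by
    intro x
    rw [hφ]
    have hc : (-1 - (s : ℚ)^2 - (s : ℚ)^4) = (((-1 - s^2 - s^4 : ℤ) : ℚ)) := by push_cast; ring
    rw [hc, den_add_intCast, Rat.den_pow]
  have hdenIter : ∀ (k : ℕ) (x : ℚ), (φ^[k] x).den = x.den ^ (2 ^ k) := by
    intro k
    induction k with
    | zero => intro x; simp
    | succ k ih =>
      intro x
      rw [Function.iterate_succ_apply', hden, ih, ← pow_mul, pow_succ]
  have h2iter : ∀ y : ℚ, φ^[2] y = φ (φ y) := by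
    intro y
    rw [Function.iterate_succ_apply', Function.iterate_one]
  refine ⟨?_, by rw [hφ]; ring, by rw [hφ]; ring, by rw [hφ]; ring, by rw [hφ]; ring, ?_⟩
  · ext P
    simp only [Set.mem_setOf_eq, Set.mem_insert_iff, Set.mem_singleton_iff]
    constructor
    · rintro ⟨m, n, hn, hP⟩
      -- P is an integer
      have hdeq : P.den ^ (2 ^ (n + m)) = P.den ^ (2 ^ m) := by
        have h1 : φ^[n] (φ^[m] P) = φ^[n + m] P := (Function.iterate_add_apply φ n m P).symm
        rw [h1] at hP
        calc P.den ^ (2 ^ (n + m)) = (φ^[n + m] P).den := (hdenIter _ _).symm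
          _ = (φ^[m] P).den := by rw [hP]
          _ = P.den ^ (2 ^ m) := hdenIter _ _
      have hd1 : P.den = 1 := by
        by_contra hd
        have hd2 : 2 ≤ P.den := by have := P.pos; omega
        have := Nat.pow_right_injective hd2 hdeq
        have hlt : 2 ^ m < 2 ^ (n + m) := Nat.pow_lt_pow_right one_lt_two (by omega)
        omega
      obtain ⟨x, hx⟩ : ∃ x : ℤ, P = (x : ℚ) := ⟨P.num, by
        rw [← Rat.num_div_den P, hd1]; simp⟩
      subst hx
      rw [hiter m x, hiter n ((fI a)^[m] x)] at hP
      have hPZ : (fI a)^[n] ((fI a)^[m] x) = (fI a)^[m] x := by exact_mod_cast hP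
      have hmid : (fI a)^[m] x = a ∨ (fI a)^[m] x = -(a + 1) :=
        periodic_class a _ ha n hn hPZ
      have hx4 : x = a ∨ x = -a ∨ x = a + 1 ∨ x = -(a + 1) := by
        apply preorbit a ha m x
        rcases hmid with h | h
        · exact Or.inl h
        · exact Or.inr (Or.inr (Or.inr h))
      rcases hx4 with h | h | h | h <;> subst h <;> push_cast [ha_def]
      · left; ring
      · right; left; ring
      · right; right; left; ring
      · right; right; right; ring
    · intro h
      rcases h with h | h | h | h <;> subst h
      · exact ⟨0, 2, one_le_two, by
          simp only [Function.iterate_zero, id_eq, h2iter, hφ]; ring⟩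
      · exact ⟨1, 2, one_le_two, by
          simp only [Function.iterate_one, h2iter, hφ]; ring⟩
      · exact ⟨1, 2, one_le_two, by
          simp only [Function.iterate_one, h2iter, hφ]; ring⟩
      · exact ⟨0, 2, one_le_two, by
          simp only [Function.iterate_zero, id_eq, h2iter, hφ]; ring⟩
  · intro P hP
    simp only [Set.mem_insert_iff, Set.mem_singleton_iff] at hP ⊢
    have hint : ∀ c : ℤ, P ^ 2 = (c : ℚ) → ∃ x : ℤ, P = (x : ℚ) ∧ x ^ 2 = c := by
      intro c hc
      have hd : P.den ^ 2 = 1 := by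
        have := Rat.den_pow P 2
        rw [hc] at this
        simpa using this.symm
      have hd1 : P.den = 1 := by nlinarith [P.pos]
      refine ⟨P.num, by rw [← Rat.num_div_den P, hd1]; simp, ?_⟩
      have : ((P.num : ℚ)) = P := by rw [← Rat.num_div_den P, hd1]; simp
      have h2 : ((P.num ^ 2 : ℤ) : ℚ) = ((c : ℤ) : ℚ) := by push_cast; rw [this, hc]
      exact_mod_cast h2
    rw [hφ] at hP
    rcases hP with h | h | h | h
    · -- P^2 = (s^2+1)^2
      have h0 : (P - ((s:ℚ)^2 + 1)) * (P + ((s:ℚ)^2 + 1)) = 0 := by linear_combination h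
      rcases mul_eq_zero.mp h0 with h1 | h1
      · right; right; left; linarith [sub_eq_zero.mp h1]
      · right; right; right
        have := add_eq_zero_iff_eq_neg.mp h1
        rw [this]; ring
    · -- P^2 = s^4 + 1 : impossible
      exfalso
      have hc : P ^ 2 = (((a ^ 2 + 1 : ℤ)) : ℚ) := by
        push_cast [ha_def]; linear_combination h
      obtain ⟨x, _, hx2⟩ := hint _ hc
      exact no_sq1 a x ha hx2
    · -- P^2 = s^4 + 2 s^2 + 2 : impossible
      exfalso
      have hc : P ^ 2 = (((a ^ 2 + 2 * a + 2 : ℤ)) : ℚ) := by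
        push_cast [ha_def]; linear_combination h
      obtain ⟨x, _, hx2⟩ := hint _ hc
      exact no_sq2 a x ha hx2
    · -- P^2 = s^4
      have h0 : (P - (s:ℚ)^2) * (P + (s:ℚ)^2) = 0 := by linear_combination h
      rcases mul_eq_zero.mp h0 with h1 | h1
      · left; linarith [sub_eq_zero.mp h1]
      · right; left
        have := add_eq_zero_iff_eq_neg.mp h1
        rw [this]
end
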